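/- Let X and Y be real Hilbert spaces and let a : X×Y → ℝ∪{+∞} be such that for every y ∈ Y the function a(·,y) is proper Φ_lsc-convex on X, and for every x ∈ X the function a(x,·) is concave on Y. Suppose that for every real β < inf_{x∈X} sup_{y∈Y} a(x,y) and every ε > 0 there exist y₁, y₂ ∈ Y and x̄ ∈ X with a(x̄,y₁) ≥ β and a(x̄,y₂) ≥ β such that (0,0) ∈ co(∂^ε_lsc a(·,y₁)(x̄) ∪ ∂^ε_lsc a(·,y₂)(x̄)). Then sup_{y∈Y} inf_{x∈X} a(x,y) = inf_{x∈X} sup_{y∈Y} a(x,y). -/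

import Mathlib

open scoped RealInnerProductSpace

noncomputable section

/-- The class `Φ_lsc` of continuous functions `x ↦ -a‖x‖² + ⟪v,x⟫ + c` with `a ≥ 0`. -/
def PhiLsc (X : Type*) [NormedAddCommGroup X] [InnerProductSpace ℝ X] : Set (X → ℝ) :=
  {φ | ∃ a : ℝ, ∃ v : X, ∃ c : ℝ, 0 ≤ a ∧ ∀ x, φ x = -a * ‖x‖ ^ 2 + ⟪v, x⟫ + c}

/-- The support set `supp(f) = {φ ∈ Φ_lsc : φ ≤ f}` of `f : X → ℝ∪{+∞}`. -/
def PhiSupp {X : Type*} [NormedAddCommGroup X] [InnerProductSpace ℝ X] (f : X → EReal) :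
    Set (X → ℝ) :=
  {φ | φ ∈ PhiLsc X ∧ ∀ x, (φ x : EReal) ≤ f x}

/-- The effective domain of `f`. -/
def PhiDom {X : Type*} (f : X → EReal) : Set X := {x | f x < ⊤}

/-- `f` is `Φ_lsc`-convex: it is the pointwise supremum of its support set. -/
def PhiConvexOn {X : Type*} [NormedAddCommGroup X] [InnerProductSpace ℝ X] (f : X → EReal) :
    Prop :=
  ∀ x, f x = ⨆ φ ∈ PhiSupp f, (φ x : EReal)

/-- The set of `ε`-`Φ_lsc`-subgradients of `f` at `xb`:
pairs `(a,v)`, `a ≥ 0`, with `f x - f xb ≥ ⟪v, x - xb⟫ - a‖x‖² + a‖xb‖² - ε` for all `x`. -/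
def SubLscE {X : Type*} [NormedAddCommGroup X] [InnerProductSpace ℝ X] (f : X → EReal)
    (ε : ℝ) (xb : X) : Set (ℝ × X) :=
  {p | 0 ≤ p.1 ∧ ∀ x : X,
    f xb + ((⟪p.2, x - xb⟫ - p.1 * ‖x‖ ^ 2 + p.1 * ‖xb‖ ^ 2 - ε : ℝ) : EReal) ≤ f x}

/-- The set of local `Φ_lsc`-subgradients of `f` at `xb`. -/
def SubLscLoc {X : Type*} [NormedAddCommGroup X] [InnerProductSpace ℝ X] (f : X → EReal)
    (xb : X) : Set (ℝ × X) :=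
  {p | 0 ≤ p.1 ∧ ∃ δ : ℝ, 0 < δ ∧ ∀ x : X, ‖x - xb‖ < δ →
    f xb + ((⟪p.2, x - xb⟫ - p.1 * ‖x‖ ^ 2 + p.1 * ‖xb‖ ^ 2 : ℝ) : EReal) ≤ f x}

/-- `f` is paraconvex (with exponent 2). -/
def ParaconvexOn {X : Type*} [NormedAddCommGroup X] [InnerProductSpace ℝ X]
    (f : X → EReal) : Prop :=
  ∃ C : ℝ, 0 < C ∧ ∀ x y : X, ∀ t : ℝ, t ∈ Set.Icc (0 : ℝ) 1 →
    f (t • x + (1 - t) • y) ≤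
      (t : EReal) * f x + ((1 - t : ℝ) : EReal) * f y + ((C * ‖x - y‖ ^ 2 : ℝ) : EReal)

/-- The proximal subdifferential of `f` at `xb`. -/
def ProxSub {X : Type*} [NormedAddCommGroup X] [InnerProductSpace ℝ X] (f : X → EReal)
    (xb : X) : Set X :=
  {v | ∃ δ : ℝ, 0 < δ ∧ ∃ ρ : ℝ, 0 ≤ ρ ∧ ∀ x : X, ‖x - xb‖ < δ →
    f xb + ((⟪v, x - xb⟫ - ρ / 2 * ‖x - xb‖ ^ 2 : ℝ) : EReal) ≤ f x}

/-- The Dini subdifferential of `f` at `xb`. -/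
def DiniSub {X : Type*} [NormedAddCommGroup X] [InnerProductSpace ℝ X] (f : X → EReal)
    (xb : X) : Set X :=
  {w | ∀ h : X, ∀ t : ℕ → ℝ, ∀ u : ℕ → X, (∀ n, 0 < t n) →
    Filter.Tendsto t Filter.atTop (nhds 0) → Filter.Tendsto u Filter.atTop (nhds h) →
    ((⟪w, h⟫ : ℝ) : EReal) ≤
      Filter.liminf (fun n => (f (xb + t n • u n) - f xb) * (((t n)⁻¹ : ℝ) : EReal)) Filter.atTop}

/-- The `Φ_lsc`-subgradients of a real-valued `f` at `xb`. -/
def SubLscR {X : Type*} [NormedAddCommGroup X] [InnerProductSpace ℝ X] (f : X → ℝ)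
    (xb : X) : Set (ℝ × X) :=
  {p | 0 ≤ p.1 ∧ ∀ x : X,
    ⟪p.2, x - xb⟫ - p.1 * ‖x‖ ^ 2 + p.1 * ‖xb‖ ^ 2 ≤ f x - f xb}

lemma my_coe_mul_le {A : EReal} {t r : ℝ} (ht : 0 ≤ t) (h : (r : EReal) ≤ A) :
    ((t * r : ℝ) : EReal) ≤ (t : EReal) * A := by
  rcases eq_or_ne A ⊤ with rfl | hA
  · rcases eq_or_lt_of_le ht with rfl | ht'
    · simp
    · rw [EReal.coe_mul_top_of_pos ht']; exact le_top
  · have hA' : A ≠ ⊥ := fun hb => by simp [hb] at h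
    obtain ⟨s, rfl⟩ : ∃ s : ℝ, A = (s : EReal) := ⟨A.toReal, (EReal.coe_toReal hA hA').symm⟩
    rw [← EReal.coe_mul]
    exact_mod_cast mul_le_mul_of_nonneg_left (by exact_mod_cast h) ht

lemma my_convex_SubLscE {X : Type*} [NormedAddCommGroup X] [InnerProductSpace ℝ X]
    (f : X → EReal) (ε : ℝ) (xb : X) (hb : f xb ≠ ⊥) : Convex ℝ (SubLscE f ε xb) := by
  rintro p hp q hq t u ht hu htu
  refine ⟨by simpa using add_nonneg (mul_nonneg ht hp.1) (mul_nonneg hu hq.1), fun x => ?_⟩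
  rcases eq_or_ne (f xb) ⊤ with hT | hT
  · have hx : f x = ⊤ := by
      have h1 := hp.2 x
      rw [hT, EReal.top_add_coe] at h1
      exact top_le_iff.mp h1
    rw [hx]; exact le_top
  · obtain ⟨b, hbeq⟩ : ∃ b : ℝ, f xb = (b : ℝ) := ⟨(f xb).toReal, (EReal.coe_toReal hT hb).symm⟩
    have h1 := hp.2 x
    have h2 := hq.2 x
    rw [hbeq, ← EReal.coe_add] at h1 h2 ⊢
    set r1 := b + (⟪p.2, x - xb⟫ - p.1 * ‖x‖ ^ 2 + p.1 * ‖xb‖ ^ 2 - ε) with hr1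
    set r2 := b + (⟪q.2, x - xb⟫ - q.1 * ‖x‖ ^ 2 + q.1 * ‖xb‖ ^ 2 - ε) with hr2
    have hu1 : u = 1 - t := by linarith
    subst hu1
    have hkey : b + (⟪(t • p + (1 - t) • q).2, x - xb⟫ - (t • p + (1 - t) • q).1 * ‖x‖ ^ 2
        + (t • p + (1 - t) • q).1 * ‖xb‖ ^ 2 - ε) = t * r1 + (1 - t) * r2 := by
      simp only [Prod.fst_add, Prod.snd_add, Prod.smul_fst, Prod.smul_snd, smul_eq_mul,
        inner_add_left, real_inner_smul_left, hr1, hr2]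
      ring
    rw [hkey]
    rcases le_total r1 r2 with hle | hle
    · refine le_trans ?_ h2
      exact_mod_cast by nlinarith
    · refine le_trans ?_ h1
      exact_mod_cast by nlinarith

lemma my_sub_lower {X : Type*} [NormedAddCommGroup X] [InnerProductSpace ℝ X]
    {f : X → EReal} {β ε : ℝ} {xb : X} (hβ : (β : EReal) ≤ f xb) {p : ℝ × X}
    (hp : p ∈ SubLscE f ε xb) (x : X) :
    ((β + (⟪p.2, x - xb⟫ - p.1 * ‖x‖ ^ 2 + p.1 * ‖xb‖ ^ 2 - ε) : ℝ) : EReal) ≤ f x := by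
  refine le_trans ?_ (hp.2 x)
  rw [EReal.coe_add]
  exact add_le_add_left hβ _


/-- the zero subgradient condition with `ε > 0` at levels `β` below `inf sup`
is a sufficient condition for the minimax equality. -/
theorem stmt_16 {X : Type*} [NormedAddCommGroup X] [InnerProductSpace ℝ X] [CompleteSpace X]
    {Y : Type*} [NormedAddCommGroup Y] [InnerProductSpace ℝ Y] [CompleteSpace Y]
    (a : X × Y → EReal) (hbot : ∀ p, a p ≠ ⊥)
    (hconv : ∀ y : Y, PhiConvexOn (fun x => a (x, y)))
    (hsupp : ∀ y : Y, (PhiSupp (fun x => a (x, y))).Nonempty)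
    (hdom : ∀ y : Y, (PhiDom (fun x => a (x, y))).Nonempty)
    (hconc : ∀ x : X, ∀ y₁ y₂ : Y, ∀ t ∈ Set.Icc (0 : ℝ) 1,
      (t : EReal) * a (x, y₁) + ((1 - t : ℝ) : EReal) * a (x, y₂) ≤
        a (x, t • y₁ + (1 - t) • y₂))
    (hzs : ∀ β : ℝ, (β : EReal) < ⨅ x : X, ⨆ y : Y, a (x, y) → ∀ ε : ℝ, 0 < ε →
      ∃ y₁ y₂ : Y, ∃ xb : X, (β : EReal) ≤ a (xb, y₁) ∧ (β : EReal) ≤ a (xb, y₂) ∧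
        ((0, 0) : ℝ × X) ∈ convexHull ℝ
          (SubLscE (fun x => a (x, y₁)) ε xb ∪ SubLscE (fun x => a (x, y₂)) ε xb)) :
    (⨆ y : Y, ⨅ x : X, a (x, y)) = ⨅ x : X, ⨆ y : Y, a (x, y) := by
  refine le_antisymm (iSup_iInf_le_iInf_iSup fun y x => a (x, y)) ?_
  by_contra hcon
  rw [not_le] at hcon
  obtain ⟨β, hβS, hβI⟩ := EReal.exists_between_coe_real hcon
  have hle : ∀ ε : ℝ, 0 < ε → ((β - ε : ℝ) : EReal) ≤ ⨆ y : Y, ⨅ x : X, a (x, y) := by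
    intro ε hε
    obtain ⟨y₁, y₂, xb, h1, h2, hco⟩ := hzs β hβI ε hε
    set A := SubLscE (fun x => a (x, y₁)) ε xb with hAdef
    set B := SubLscE (fun x => a (x, y₂)) ε xb with hBdef
    have hAc : Convex ℝ A := my_convex_SubLscE _ _ _ (hbot (xb, y₁))
    have hBc : Convex ℝ B := my_convex_SubLscE _ _ _ (hbot (xb, y₂))
    have key : ∃ y : Y, ∀ x, ((β - ε : ℝ) : EReal) ≤ a (x, y) := by
      rcases A.eq_empty_or_nonempty with hA | hA
      · rw [hA, Set.empty_union, hBc.convexHull_eq] at hco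
        refine ⟨y₂, fun x => ?_⟩
        have := my_sub_lower (f := fun x => a (x, y₂)) h2 hco x
        simpa [sub_eq_add_neg] using this
      · rcases B.eq_empty_or_nonempty with hB | hB
        · rw [hB, Set.union_empty, hAc.convexHull_eq] at hco
          refine ⟨y₁, fun x => ?_⟩
          have := my_sub_lower (f := fun x => a (x, y₁)) h1 hco x
          simpa [sub_eq_add_neg] using this
        · rw [hAc.convexHull_union hBc hA hB, mem_convexJoin] at hco
          obtain ⟨p, hp, q, hq, t, u, ht, hu, htu, heq⟩ := hco
          have hu1 : u = 1 - t := by linarith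
          subst hu1
          refine ⟨t • y₁ + (1 - t) • y₂, fun x => ?_⟩
          have e1 := my_sub_lower (f := fun x => a (x, y₁)) h1 hp x
          have e2 := my_sub_lower (f := fun x => a (x, y₂)) h2 hq x
          refine le_trans ?_ (hconc x y₁ y₂ t ⟨ht, by linarith⟩)
          have m1 := my_coe_mul_le ht e1
          have m2 := my_coe_mul_le (by linarith : (0:ℝ) ≤ 1 - t) e2
          refine le_trans ?_ (add_le_add m1 m2)
          rw [← EReal.coe_add, EReal.coe_le_coe_iff]
          have hfst : t * p.1 + (1 - t) * q.1 = 0 := by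
            have := congrArg Prod.fst heq
            simpa using this
          have hsnd : t • p.2 + (1 - t) • q.2 = (0 : X) := by
            have := congrArg Prod.snd heq
            simpa using this
          have hinn : t * ⟪p.2, x - xb⟫ + (1 - t) * ⟪q.2, x - xb⟫ = 0 := by
            have := congrArg (fun v : X => ⟪v, x - xb⟫) hsnd
            simpa [inner_add_left, real_inner_smul_left] using this
          nlinarith [hfst, hinn, sq_nonneg (‖x‖ - ‖xb‖)]
    obtain ⟨y, hy⟩ := key
    exact le_trans (le_iInf hy) (le_iSup (fun y => ⨅ x, a (x, y)) y)
  have hfin : (β : EReal) ≤ ⨆ y : Y, ⨅ x : X, a (x, y) := by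
    by_contra h'
    rw [not_le] at h'
    obtain ⟨γ, hγ1, hγ2⟩ := EReal.exists_between_coe_real h'
    have hγβ : γ < β := by exact_mod_cast hγ2
    have := hle (β - γ) (by linarith)
    rw [show β - (β - γ) = γ by ring] at this
    exact absurd this (not_le.mpr hγ1)
  exact absurd hfin (not_le.mpr hβS)
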